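/- Let X and Z be real m×n matrices. Then the trace inner product satisfies ⟨X, Z⟩ := trace(XᵀZ) ≤ ∑_{i=1}^{min(m,n)} σ_i(X) σ_i(Z), where σ_i(X) and σ_i(Z) denote the singular values of X and Z listed in decreasing order (the von Neumann trace inequality). -/

import Mathlib

noncomputable section

open Matrix

/-- `U * diagonal σ * Vᵀ` is a (thin) singular value decomposition of `X`, with the
singular values `σ` listed in decreasing order. -/
def IsThinSVD {m n p : ℕ} (X : Matrix (Fin m) (Fin n) ℝ) (U : Matrix (Fin m) (Fin p) ℝ)
    (σ : Fin p → ℝ) (V : Matrix (Fin n) (Fin p) ℝ) : Prop :=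
  X = U * Matrix.diagonal σ * Vᵀ ∧ Uᵀ * U = 1 ∧ Vᵀ * V = 1 ∧
    (∀ i, 0 ≤ σ i) ∧ Antitone σ

private lemma vnti_psd_diag_nonneg {p : ℕ} {M : Matrix (Fin p) (Fin p) ℝ}
    (h : M.PosSemidef) (i : Fin p) : 0 ≤ M i i := by
  have := h.diag_nonneg (i := i)
  simpa [dotProduct, Matrix.mulVec, Pi.single_apply, mul_ite, ite_mul,
    Finset.sum_ite_eq, Finset.sum_ite_eq'] using this

private lemma vnti_gram_diag_le_one {q p : ℕ} {U W : Matrix (Fin q) (Fin p) ℝ}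
    (hU : Uᵀ * U = 1) (hW : Wᵀ * W = 1) (i : Fin p) :
    ((Uᵀ * W) * (Uᵀ * W)ᵀ) i i ≤ 1 := by
  have hid : ∀ (r s : ℕ) (M : Matrix (Fin r) (Fin s) ℝ), Mᴴ = Mᵀ := by
    intro r s M; ext a b; simp [Matrix.conjTranspose_apply]
  have hprojT : ((1 : Matrix (Fin q) (Fin q) ℝ) - W * Wᵀ)ᵀ = 1 - W * Wᵀ := by
    simp [Matrix.transpose_sub, Matrix.transpose_mul, Matrix.mul_assoc]
  have hproj : ((1 : Matrix (Fin q) (Fin q) ℝ) - W * Wᵀ).PosSemidef := by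
    have h2 : ((1 : Matrix (Fin q) (Fin q) ℝ) - W * Wᵀ)ᴴ * (1 - W * Wᵀ) = 1 - W * Wᵀ := by
      rw [hid, hprojT]
      have hWW : W * Wᵀ * (W * Wᵀ) = W * Wᵀ := by
        calc W * Wᵀ * (W * Wᵀ) = W * (Wᵀ * W) * Wᵀ := by
              simp only [Matrix.mul_assoc]
          _ = W * Wᵀ := by rw [hW, Matrix.mul_one]
      simp only [Matrix.sub_mul, Matrix.mul_sub, Matrix.one_mul, Matrix.mul_one, hWW]
      abel
    rw [← h2]
    exact Matrix.posSemidef_conjTranspose_mul_self _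
  have hcong : (Uᴴ * ((1 : Matrix (Fin q) (Fin q) ℝ) - W * Wᵀ) * U).PosSemidef :=
    hproj.conjTranspose_mul_mul_same U
  have heq : Uᴴ * ((1 : Matrix (Fin q) (Fin q) ℝ) - W * Wᵀ) * U
      = 1 - (Uᵀ * W) * (Uᵀ * W)ᵀ := by
    rw [hid]
    rw [Matrix.mul_sub, Matrix.mul_one, Matrix.sub_mul, hU]
    congr 1
    rw [Matrix.transpose_mul, Matrix.transpose_transpose]
    simp only [Matrix.mul_assoc]
  rw [heq] at hcong
  have := vnti_psd_diag_nonneg hcong i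
  simp only [Matrix.sub_apply, Matrix.one_apply_eq] at this
  linarith

/-- Each row of `Uᵀ W` has squared norm at most 1. -/
private lemma vnti_row_sq {q p : ℕ} {U W : Matrix (Fin q) (Fin p) ℝ}
    (hU : Uᵀ * U = 1) (hW : Wᵀ * W = 1) (i : Fin p) :
    ∑ j, ((Uᵀ * W) i j) ^ 2 ≤ 1 := by
  have h := vnti_gram_diag_le_one hU hW i
  rw [Matrix.mul_apply] at h
  calc ∑ j, ((Uᵀ * W) i j) ^ 2
      = ∑ j, (Uᵀ * W) i j * (Uᵀ * W)ᵀ j i := by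
        apply Finset.sum_congr rfl; intro j _
        rw [Matrix.transpose_apply, sq]
    _ ≤ 1 := h

private lemma vnti_entry_symm {q p : ℕ} (U W : Matrix (Fin q) (Fin p) ℝ) (i j : Fin p) :
    (Uᵀ * W) i j = (Wᵀ * U) j i := by
  rw [Matrix.mul_apply, Matrix.mul_apply]
  apply Finset.sum_congr rfl; intro s _
  rw [Matrix.transpose_apply, Matrix.transpose_apply, mul_comm]

/-- Abel summation with boundary term. -/
private lemma vnti_abel (a c : ℕ → ℝ) (p : ℕ) :
    ∑ i ∈ Finset.range p, a i * c i
      = (∑ k ∈ Finset.range p, (a k - a (k+1)) * ∑ i ∈ Finset.range (k+1), c i)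
        + a p * ∑ i ∈ Finset.range p, c i := by
  induction p with
  | zero => simp
  | succ p ih =>
      rw [Finset.sum_range_succ (f := fun i => a i * c i), ih,
        Finset.sum_range_succ (f := fun k => (a k - a (k+1)) * ∑ i ∈ Finset.range (k+1), c i),
        Finset.sum_range_succ (f := c)]
      ring

private lemma vnti_abel' (a c : ℕ → ℝ) (p : ℕ) (hap : a p = 0) :
    ∑ i ∈ Finset.range p, a i * c i
      = ∑ k ∈ Finset.range p, (a k - a (k+1)) * ∑ i ∈ Finset.range (k+1), c i := by
  rw [vnti_abel, hap, zero_mul, add_zero]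

private lemma vnti_count (k l : ℕ) :
    ∑ j ∈ Finset.range (l+1), (if j ≤ k then (1:ℝ) else 0)
      = ((min (k+1) (l+1) : ℕ) : ℝ) := by
  rw [Finset.sum_boole]
  congr 1
  have : Finset.filter (fun j => j ≤ k) (Finset.range (l+1))
      = Finset.range (min (k+1) (l+1)) := by
    ext x; simp only [Finset.mem_filter, Finset.mem_range, lt_min_iff]; omega
  rw [this, Finset.card_range]

/-- The key rearrangement lemma for doubly substochastic weights. -/
private lemma vnti_substoch (p : ℕ) (a b : ℕ → ℝ) (S : ℕ → ℕ → ℝ)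
    (ha0 : ∀ i, 0 ≤ a i) (hb0 : ∀ i, 0 ≤ b i)
    (haA : ∀ i, a (i+1) ≤ a i) (hbA : ∀ i, b (i+1) ≤ b i)
    (hap : a p = 0) (hbp : b p = 0)
    (hS0 : ∀ i j, 0 ≤ S i j)
    (hrow : ∀ i, i < p → ∑ j ∈ Finset.range p, S i j ≤ 1)
    (hcol : ∀ j, j < p → ∑ i ∈ Finset.range p, S i j ≤ 1) :
    ∑ i ∈ Finset.range p, ∑ j ∈ Finset.range p, a i * b j * S i j
      ≤ ∑ i ∈ Finset.range p, a i * b i := by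
  -- rewrite LHS
  have hL1 : ∑ i ∈ Finset.range p, ∑ j ∈ Finset.range p, a i * b j * S i j
      = ∑ i ∈ Finset.range p, a i * ∑ j ∈ Finset.range p, b j * S i j := by
    apply Finset.sum_congr rfl; intro i _
    rw [Finset.mul_sum]; apply Finset.sum_congr rfl; intro j _; ring
  have hL2 : ∑ i ∈ Finset.range p, ∑ j ∈ Finset.range p, a i * b j * S i j
      = ∑ k ∈ Finset.range p, ∑ l ∈ Finset.range p,
          (a k - a (k+1)) * (b l - b (l+1))
            * ∑ j ∈ Finset.range (l+1), ∑ i ∈ Finset.range (k+1), S i j := by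
    rw [hL1, vnti_abel' a _ p hap]
    apply Finset.sum_congr rfl; intro k _
    have hinner : ∑ i ∈ Finset.range (k+1), ∑ j ∈ Finset.range p, b j * S i j
        = ∑ j ∈ Finset.range p, b j * ∑ i ∈ Finset.range (k+1), S i j := by
      rw [Finset.sum_comm]
      apply Finset.sum_congr rfl; intro j _; rw [Finset.mul_sum]
    rw [hinner, vnti_abel' b _ p hbp, Finset.mul_sum]
    apply Finset.sum_congr rfl; intro l _; ring
  -- rewrite RHS
  have hR : ∑ i ∈ Finset.range p, a i * b i
      = ∑ k ∈ Finset.range p, ∑ l ∈ Finset.range p,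
          (a k - a (k+1)) * (b l - b (l+1)) * ((min (k+1) (l+1) : ℕ) : ℝ) := by
    rw [vnti_abel' a b p hap]
    apply Finset.sum_congr rfl; intro k hk
    rw [Finset.mem_range] at hk
    have hstep : ∑ i ∈ Finset.range (k+1), b i
        = ∑ i ∈ Finset.range p, b i * (if i ≤ k then (1:ℝ) else 0) := by
      have h1 : ∑ i ∈ Finset.range p, b i * (if i ≤ k then (1:ℝ) else 0)
          = ∑ i ∈ Finset.range p, (if i ≤ k then b i else 0) := by
        apply Finset.sum_congr rfl; intro i _; split <;> simp
      rw [h1, ← Finset.sum_filter]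
      rw [show Finset.filter (fun i => i ≤ k) (Finset.range p) = Finset.range (k+1) by
        ext x; simp only [Finset.mem_filter, Finset.mem_range]; omega]
    rw [hstep, vnti_abel' b _ p hbp, Finset.mul_sum]
    apply Finset.sum_congr rfl; intro l _
    rw [vnti_count]; ring
  rw [hL2, hR]
  apply Finset.sum_le_sum; intro k hk
  apply Finset.sum_le_sum; intro l hl
  rw [Finset.mem_range] at hk hl
  have hdA : 0 ≤ a k - a (k+1) := by have := haA k; linarith
  have hdB : 0 ≤ b l - b (l+1) := by have := hbA l; linarith
  apply mul_le_mul_of_nonneg_left _ (mul_nonneg hdA hdB)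
  -- T k l ≤ min (k+1) (l+1)
  have hTk : ∑ j ∈ Finset.range (l+1), ∑ i ∈ Finset.range (k+1), S i j ≤ (k:ℝ)+1 := by
    rw [Finset.sum_comm]
    calc ∑ i ∈ Finset.range (k+1), ∑ j ∈ Finset.range (l+1), S i j
        ≤ ∑ i ∈ Finset.range (k+1), ∑ j ∈ Finset.range p, S i j := by
          apply Finset.sum_le_sum; intro i _
          apply Finset.sum_le_sum_of_subset_of_nonneg
          · exact Finset.range_subset_range.2 hl
          · intro j _ _; exact hS0 i j
      _ ≤ ∑ i ∈ Finset.range (k+1), 1 := by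
          apply Finset.sum_le_sum; intro i hi
          rw [Finset.mem_range] at hi
          exact hrow i (lt_of_lt_of_le hi hk)
      _ = (k:ℝ)+1 := by simp
  have hTl : ∑ j ∈ Finset.range (l+1), ∑ i ∈ Finset.range (k+1), S i j ≤ (l:ℝ)+1 := by
    calc ∑ j ∈ Finset.range (l+1), ∑ i ∈ Finset.range (k+1), S i j
        ≤ ∑ j ∈ Finset.range (l+1), ∑ i ∈ Finset.range p, S i j := by
          apply Finset.sum_le_sum; intro j _
          apply Finset.sum_le_sum_of_subset_of_nonneg
          · exact Finset.range_subset_range.2 hk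
          · intro i _ _; exact hS0 i j
      _ ≤ ∑ j ∈ Finset.range (l+1), 1 := by
          apply Finset.sum_le_sum; intro j hj
          rw [Finset.mem_range] at hj
          exact hcol j (lt_of_lt_of_le hj hl)
      _ = (l:ℝ)+1 := by simp
  have : ((min (k+1) (l+1) : ℕ) : ℝ) = min ((k:ℝ)+1) ((l:ℝ)+1) := by
    push_cast [Nat.cast_min]; ring_nf
  rw [this]
  exact le_min hTk hTl

/-- Von Neumann's trace inequality: `⟨X, Z⟩ = trace (Xᵀ * Z) ≤ ∑ i, σᵢ(X) σᵢ(Z)`. -/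
theorem von_neumann_trace_inequality {m n : ℕ} (X Z : Matrix (Fin m) (Fin n) ℝ)
    (UX : Matrix (Fin m) (Fin (min m n)) ℝ) (σX : Fin (min m n) → ℝ)
    (VX : Matrix (Fin n) (Fin (min m n)) ℝ)
    (UZ : Matrix (Fin m) (Fin (min m n)) ℝ) (σZ : Fin (min m n) → ℝ)
    (VZ : Matrix (Fin n) (Fin (min m n)) ℝ)
    (hX : IsThinSVD X UX σX VX) (hZ : IsThinSVD Z UZ σZ VZ) :
    Matrix.trace (Xᵀ * Z) ≤ ∑ i, σX i * σZ i := by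
  obtain ⟨hXeq, hUX, hVX, hσX0, hσXA⟩ := hX
  obtain ⟨hZeq, hUZ, hVZ, hσZ0, hσZA⟩ := hZ
  set A : Matrix (Fin (min m n)) (Fin (min m n)) ℝ := UXᵀ * UZ with hA
  set B : Matrix (Fin (min m n)) (Fin (min m n)) ℝ := VZᵀ * VX with hB
  -- Step 1: trace formula
  have htrace : Matrix.trace (Xᵀ * Z)
      = ∑ i : Fin (min m n), ∑ j : Fin (min m n), σX i * A i j * σZ j * B j i := by
    rw [hXeq, hZeq]
    have hXT : (UX * Matrix.diagonal σX * VXᵀ)ᵀ = VX * Matrix.diagonal σX * UXᵀ := by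
      rw [Matrix.transpose_mul, Matrix.transpose_mul, Matrix.transpose_transpose,
        Matrix.diagonal_transpose, Matrix.mul_assoc]
    rw [hXT]
    have hre : VX * Matrix.diagonal σX * UXᵀ * (UZ * Matrix.diagonal σZ * VZᵀ)
        = VX * (Matrix.diagonal σX * A * Matrix.diagonal σZ * VZᵀ) := by
      rw [hA]; simp only [Matrix.mul_assoc]
    rw [hre, Matrix.trace_mul_comm]
    have hre2 : Matrix.diagonal σX * A * Matrix.diagonal σZ * VZᵀ * VX
        = Matrix.diagonal σX * A * Matrix.diagonal σZ * B := by
      rw [hB]; simp only [Matrix.mul_assoc]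
    rw [hre2]
    rw [Matrix.trace]
    apply Finset.sum_congr rfl; intro i _
    rw [Matrix.diag_apply, Matrix.mul_apply]
    apply Finset.sum_congr rfl; intro j _
    rw [Matrix.mul_diagonal, Matrix.diagonal_mul]
  -- Step 2: termwise AM-GM
  have hstep2 : Matrix.trace (Xᵀ * Z)
      ≤ ∑ i : Fin (min m n), ∑ j : Fin (min m n), σX i * σZ j * ((A i j ^ 2 + B j i ^ 2) / 2) := by
    rw [htrace]
    apply Finset.sum_le_sum; intro i _
    apply Finset.sum_le_sum; intro j _
    nlinarith [sq_nonneg (A i j - B j i), mul_nonneg (hσX0 i) (hσZ0 j),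
      mul_nonneg (mul_nonneg (hσX0 i) (hσZ0 j)) (sq_nonneg (A i j - B j i))]
  refine le_trans hstep2 ?_
  -- Step 3: extend to ℕ and apply the substochastic lemma
  set a : ℕ → ℝ := fun i => if h : i < min m n then σX ⟨i, h⟩ else 0 with ha
  set b : ℕ → ℝ := fun i => if h : i < min m n then σZ ⟨i, h⟩ else 0 with hb
  set S : ℕ → ℕ → ℝ := fun i j =>
    if h : i < min m n then if h' : j < min m n then (A ⟨i, h⟩ ⟨j, h'⟩ ^ 2 + B ⟨j, h'⟩ ⟨i, h⟩ ^ 2) / 2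
      else 0 else 0 with hS
  have hsum : ∀ (g : Fin (min m n) → ℝ), ∑ i : Fin (min m n), g i
      = ∑ i ∈ Finset.range (min m n), (if h : i < min m n then g ⟨i, h⟩ else 0) := by
    intro g
    rw [← Fin.sum_univ_eq_sum_range]
    apply Finset.sum_congr rfl; intro i _
    rw [dif_pos i.isLt]
  have hLHS : ∑ i : Fin (min m n), ∑ j : Fin (min m n), σX i * σZ j * ((A i j ^ 2 + B j i ^ 2) / 2)
      = ∑ i ∈ Finset.range (min m n), ∑ j ∈ Finset.range (min m n), a i * b j * S i j := by
    rw [hsum (fun i => ∑ j : Fin (min m n), σX i * σZ j * ((A i j ^ 2 + B j i ^ 2) / 2))]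
    apply Finset.sum_congr rfl; intro i hi
    rw [Finset.mem_range] at hi
    rw [dif_pos hi, hsum (fun j => σX ⟨i, hi⟩ * σZ j * ((A ⟨i, hi⟩ j ^ 2 + B j ⟨i, hi⟩ ^ 2) / 2))]
    apply Finset.sum_congr rfl; intro j hj
    rw [Finset.mem_range] at hj
    simp only [ha, hb, hS, dif_pos hi, dif_pos hj]
  have hRHS : ∑ i : Fin (min m n), σX i * σZ i = ∑ i ∈ Finset.range (min m n), a i * b i := by
    rw [hsum (fun i => σX i * σZ i)]
    apply Finset.sum_congr rfl; intro i hi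
    rw [Finset.mem_range] at hi
    simp only [ha, hb, dif_pos hi]
  rw [hLHS, hRHS]
  -- verify hypotheses of vnti_substoch
  have ha0 : ∀ i, 0 ≤ a i := by
    intro i; simp only [ha]; split
    · exact hσX0 _
    · exact le_refl 0
  have hb0 : ∀ i, 0 ≤ b i := by
    intro i; simp only [hb]; split
    · exact hσZ0 _
    · exact le_refl 0
  have haA : ∀ i, a (i + 1) ≤ a i := by
    intro i
    by_cases h1 : i + 1 < min m n
    · have h0 : i < min m n := Nat.lt_of_succ_lt h1
      simp only [ha, dif_pos h1, dif_pos h0]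
      exact hσXA (by simp [Fin.le_def])
    · simp only [ha, dif_neg h1]
      exact ha0 i
  have hbA : ∀ i, b (i + 1) ≤ b i := by
    intro i
    by_cases h1 : i + 1 < min m n
    · have h0 : i < min m n := Nat.lt_of_succ_lt h1
      simp only [hb, dif_pos h1, dif_pos h0]
      exact hσZA (by simp [Fin.le_def])
    · simp only [hb, dif_neg h1]
      exact hb0 i
  have hap : a (min m n) = 0 := by simp only [ha]; exact dif_neg (lt_irrefl _)
  have hbp : b (min m n) = 0 := by simp only [hb]; exact dif_neg (lt_irrefl _)
  have hS0 : ∀ i j, 0 ≤ S i j := by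
    intro i j; simp only [hS]
    split
    · split
      · positivity
      · exact le_refl 0
    · exact le_refl 0
  have hrowA : ∀ i : Fin (min m n), ∑ j : Fin (min m n), A i j ^ 2 ≤ 1 := vnti_row_sq hUX hUZ
  have hcolB : ∀ i : Fin (min m n), ∑ j : Fin (min m n), B j i ^ 2 ≤ 1 := by
    intro i
    have h := vnti_row_sq hVX hVZ i
    calc ∑ j : Fin (min m n), B j i ^ 2 = ∑ j : Fin (min m n), ((VXᵀ * VZ) i j) ^ 2 := by
          apply Finset.sum_congr rfl; intro j _
          rw [hB, vnti_entry_symm VZ VX j i]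
      _ ≤ 1 := h
  have hcolA : ∀ j : Fin (min m n), ∑ i : Fin (min m n), A i j ^ 2 ≤ 1 := by
    intro j
    have h := vnti_row_sq hUZ hUX j
    calc ∑ i : Fin (min m n), A i j ^ 2 = ∑ i : Fin (min m n), ((UZᵀ * UX) j i) ^ 2 := by
          apply Finset.sum_congr rfl; intro i _
          rw [hA, vnti_entry_symm UX UZ i j]
      _ ≤ 1 := h
  have hrowB : ∀ j : Fin (min m n), ∑ i : Fin (min m n), B j i ^ 2 ≤ 1 := vnti_row_sq hVZ hVX
  have hrow : ∀ i, i < min m n → ∑ j ∈ Finset.range (min m n), S i j ≤ 1 := by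
    intro i hi
    have heq : ∑ j ∈ Finset.range (min m n), S i j
        = ∑ j : Fin (min m n), (A ⟨i, hi⟩ j ^ 2 + B j ⟨i, hi⟩ ^ 2) / 2 := by
      rw [hsum (fun j => (A ⟨i, hi⟩ j ^ 2 + B j ⟨i, hi⟩ ^ 2) / 2)]
      apply Finset.sum_congr rfl; intro j hj
      rw [Finset.mem_range] at hj
      simp only [hS, dif_pos hi, dif_pos hj]
    rw [heq]
    have h1 := hrowA ⟨i, hi⟩
    have h2 := hcolB ⟨i, hi⟩
    calc ∑ j : Fin (min m n), (A ⟨i, hi⟩ j ^ 2 + B j ⟨i, hi⟩ ^ 2) / 2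
        = ((∑ j : Fin (min m n), A ⟨i, hi⟩ j ^ 2) + ∑ j : Fin (min m n), B j ⟨i, hi⟩ ^ 2) / 2 := by
          rw [← Finset.sum_add_distrib, Finset.sum_div]
      _ ≤ (1 + 1) / 2 := by linarith
      _ = 1 := by norm_num
  have hcol : ∀ j, j < min m n → ∑ i ∈ Finset.range (min m n), S i j ≤ 1 := by
    intro j hj
    have heq : ∑ i ∈ Finset.range (min m n), S i j
        = ∑ i : Fin (min m n), (A i ⟨j, hj⟩ ^ 2 + B ⟨j, hj⟩ i ^ 2) / 2 := by
      rw [hsum (fun i => (A i ⟨j, hj⟩ ^ 2 + B ⟨j, hj⟩ i ^ 2) / 2)]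
      apply Finset.sum_congr rfl; intro i hi
      rw [Finset.mem_range] at hi
      simp only [hS, dif_pos hi, dif_pos hj]
    rw [heq]
    have h1 := hcolA ⟨j, hj⟩
    have h2 := hrowB ⟨j, hj⟩
    calc ∑ i : Fin (min m n), (A i ⟨j, hj⟩ ^ 2 + B ⟨j, hj⟩ i ^ 2) / 2
        = ((∑ i : Fin (min m n), A i ⟨j, hj⟩ ^ 2) + ∑ i : Fin (min m n), B ⟨j, hj⟩ i ^ 2) / 2 := by
          rw [← Finset.sum_add_distrib, Finset.sum_div]
      _ ≤ (1 + 1) / 2 := by linarith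
      _ = 1 := by norm_num
  exact vnti_substoch (min m n) a b S ha0 hb0 haA hbA hap hbp hS0 hrow hcol

end
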